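/- Let (Z, d) be a pseudometric space, ι an index set, N, k ≥ 1 natural numbers, and a : ι → Z → [0,∞) a family of functions such that each a_i is 1-Lipschitz, for every z ∈ Z the set { i ∈ ι | a_i(z) ≠ 0 } has at most N elements, and s(z) := ∑_{i ∈ ι} a_i(z) ≥ 4Nk for every z ∈ Z. Then for all x, y ∈ Z: ∑_{i ∈ ι} |a_i(x)/s(x) − a_i(y)/s(y)| ≤ d(x,y)/k. That is, the map z ↦ (a_i(z)/s(z))_{i ∈ ι} is (1/k)-Lipschitz into ℓ¹(ι). -/

import Mathlib

/-- If every `a i` is a nonnegative `1`-Lipschitz function on a pseudometric space `Z`,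
at each point at most `N` of them are nonzero, and `s(z) := ∑ᵢ a i z ≥ 4Nk`, then
`z ↦ (a i z / s z)ᵢ` is `(1/k)`-Lipschitz into `ℓ¹(ι)`:
`∑ᵢ |a i x / s x − a i y / s y| ≤ d(x,y)/k`. -/
theorem tsum_abs_normalized_sub_le {Z : Type*} [PseudoMetricSpace Z] {ι : Type*}
    (N k : ℕ) (hN : 1 ≤ N) (hk : 1 ≤ k) (a : ι → Z → ℝ)
    (hnonneg : ∀ i z, 0 ≤ a i z)
    (hlip : ∀ i, LipschitzWith 1 (a i))
    (hcard : ∀ z : Z, {i | a i z ≠ 0}.encard ≤ (N : ℕ∞))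
    (hsum : ∀ z : Z, 4 * N * k ≤ ∑' i, a i z) :
    ∀ x y : Z, ∑' i, |a i x / (∑' j, a j x) - a i y / (∑' j, a j y)| ≤ dist x y / k := by
  intro x y
  have hxf : {i | a i x ≠ 0}.Finite := Set.finite_of_encard_le_coe (hcard x)
  have hyf : {i | a i y ≠ 0}.Finite := Set.finite_of_encard_le_coe (hcard y)
  set F : Finset ι := (hxf.union hyf).toFinset with hF
  have hmemF : ∀ i, i ∉ F → a i x = 0 ∧ a i y = 0 := by
    intro i hi
    simp only [hF, Set.Finite.mem_toFinset, Set.mem_union, Set.mem_setOf_eq, not_or,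
      not_not] at hi
    exact hi
  set sx := ∑' j, a j x with hsx
  set sy := ∑' j, a j y with hsy
  have hsxF : sx = ∑ i ∈ F, a i x := tsum_eq_sum (fun i hi => (hmemF i hi).1)
  have hsyF : sy = ∑ i ∈ F, a i y := tsum_eq_sum (fun i hi => (hmemF i hi).2)
  have hN' : (1:ℝ) ≤ N := by exact_mod_cast hN
  have hk' : (1:ℝ) ≤ k := by exact_mod_cast hk
  have hsx4 : 4 * N * k ≤ sx := hsum x
  have hsy4 : 4 * N * k ≤ sy := hsum y
  have h4 : (0:ℝ) < 4 * N * k := by nlinarith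
  have hsxpos : 0 < sx := lt_of_lt_of_le h4 hsx4
  have hsypos : 0 < sy := lt_of_lt_of_le h4 hsy4
  have hd : 0 ≤ dist x y := dist_nonneg
  -- card bound
  have hcardF : (F.card : ℝ) ≤ 2 * N := by
    have h1 : ({i | a i x ≠ 0} ∪ {i | a i y ≠ 0}).encard ≤ (N:ℕ∞) + N :=
      le_trans (Set.encard_union_le _ _) (add_le_add (hcard x) (hcard y))
    have h2 : (F.card : ℕ∞) = ({i | a i x ≠ 0} ∪ {i | a i y ≠ 0}).encard :=
      ((hxf.union hyf).encard_eq_coe_toFinset_card).symm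
    have h3 : (F.card : ℕ∞) ≤ ((2 * N : ℕ) : ℕ∞) := by
      rw [h2]; push_cast; simpa [two_mul] using h1
    have h4 : F.card ≤ 2 * N := by exact_mod_cast h3
    calc (F.card : ℝ) ≤ ((2 * N : ℕ) : ℝ) := by exact_mod_cast h4
      _ = 2 * N := by push_cast; ring
  have hdiff : ∀ i, |a i x - a i y| ≤ dist x y := fun i => by
    simpa [Real.dist_eq] using (hlip i).dist_le_mul x y
  have hsumdiff : ∑ i ∈ F, |a i x - a i y| ≤ 2 * N * dist x y := by
    calc ∑ i ∈ F, |a i x - a i y| ≤ ∑ _i ∈ F, dist x y :=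
          Finset.sum_le_sum (fun i _ => hdiff i)
      _ = F.card * dist x y := by rw [Finset.sum_const, nsmul_eq_mul]
      _ ≤ 2 * N * dist x y := mul_le_mul_of_nonneg_right hcardF dist_nonneg
  have hsdiff : |sy - sx| ≤ 2 * N * dist x y := by
    rw [hsxF, hsyF, ← Finset.sum_sub_distrib]
    calc |∑ i ∈ F, (a i y - a i x)| ≤ ∑ i ∈ F, |a i y - a i x| :=
          Finset.abs_sum_le_sum_abs _ _
      _ = ∑ i ∈ F, |a i x - a i y| := by simp [abs_sub_comm]
      _ ≤ 2 * N * dist x y := hsumdiff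
  have hterm : ∀ i ∈ F,
      |a i x / sx - a i y / sy| ≤ |a i x - a i y| / sx + a i y * |sy - sx| / (sx * sy) := by
    intro i _
    have heq : a i x / sx - a i y / sy
        = (a i x - a i y) / sx + a i y * (sy - sx) / (sx * sy) := by
      field_simp
      ring
    rw [heq]
    refine le_trans (abs_add_le _ _) (le_of_eq ?_)
    rw [abs_div, abs_of_pos hsxpos, abs_div, abs_mul, abs_of_nonneg (hnonneg i y),
      abs_of_pos (mul_pos hsxpos hsypos)]
  calc ∑' i, |a i x / sx - a i y / sy| = ∑ i ∈ F, |a i x / sx - a i y / sy| := by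
        refine tsum_eq_sum (fun i hi => ?_)
        simp [(hmemF i hi).1, (hmemF i hi).2]
    _ ≤ ∑ i ∈ F, (|a i x - a i y| / sx + a i y * |sy - sx| / (sx * sy)) :=
        Finset.sum_le_sum hterm
    _ = (∑ i ∈ F, |a i x - a i y|) / sx + (∑ i ∈ F, a i y) * |sy - sx| / (sx * sy) := by
        rw [Finset.sum_add_distrib, ← Finset.sum_div, ← Finset.sum_div, ← Finset.sum_mul]
    _ = (∑ i ∈ F, |a i x - a i y|) / sx + |sy - sx| / sx := by
        rw [← hsyF]
        congr 1
        field_simp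
    _ ≤ (2 * N * dist x y) / sx + (2 * N * dist x y) / sx := by
        gcongr
    _ = (4 * N * dist x y) / sx := by ring
    _ ≤ dist x y / k := by
        rw [div_le_div_iff₀ hsxpos (by linarith : (0:ℝ) < k)]
        nlinarith [mul_le_mul_of_nonneg_left hsx4 hd]
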